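/- For every 0 ≤ r ≤ m, the family of evaluation functions { mon_{S_1 ∪ ⋯ ∪ S_m} : S_i ⊆ B_i and |S_i| ≤ r' for every i ∈ {1,…,m}, and at most r of the sets S_1,…,S_m are nonempty } is a basis (a linearly independent spanning family) of the recursive subproduct code D(r,m) with base code RM(r',m'). -/

import Mathlib

/-- Length-`(2^m')^μ` vectors, viewed as functions on `μ` blocks of `m'` binary variables. -/
abbrev Vsp (m' μ : ℕ) := (Fin μ → (Fin m' → ZMod 2)) → ZMod 2

/-- The Reed–Muller code `RM(r', m')` : span of monomials of degree at most `r'`. -/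
def RMbase (r' m' : ℕ) : Submodule (ZMod 2) ((Fin m' → ZMod 2) → ZMod 2) :=
  Submodule.span (ZMod 2)
    {c | ∃ S : Finset (Fin m'), S.card ≤ r' ∧ c = fun x => ∏ i ∈ S, x i}

/-- `(c ⊙ v)(x₁,…,x_μ,x_{μ+1}) = c(x₁,…,x_μ) · v(x_{μ+1})`. -/
def odot {m' μ : ℕ} (c : Vsp m' μ) (v : (Fin m' → ZMod 2) → ZMod 2) : Vsp m' (μ + 1) :=
  fun x => c (fun i => x i.castSucc) * v (x (Fin.last μ))

/-- The recursive subproduct code `D(r, μ)` with base code `RM(r', m')`. -/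
def Dcode (r' m' : ℕ) : ℕ → (μ : ℕ) → Submodule (ZMod 2) (Vsp m' μ)
  | _, 0 => Submodule.span (ZMod 2) {c : Vsp m' 0 | c = fun _ => 1}
  | 0, μ + 1 => Submodule.span (ZMod 2) {c : Vsp m' (μ + 1) | c = fun _ => 1}
  | _ + 1, 1 => Submodule.span (ZMod 2)
      {c : Vsp m' 1 | ∃ S : Finset (Fin m'), S.card ≤ r' ∧ c = fun x => ∏ i ∈ S, x 0 i}
  | r + 1, μ + 2 =>
    if r + 1 < μ + 2 then
      Submodule.span (ZMod 2)
        ({w | ∃ c ∈ Dcode r' m' (r + 1) (μ + 1), w = odot c (fun _ => 1)} ∪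
         {w | ∃ c ∈ Dcode r' m' r (μ + 1), ∃ v ∈ RMbase r' m', w = odot c v})
    else
      Submodule.span (ZMod 2)
        {w | ∃ c ∈ Dcode r' m' (μ + 1) (μ + 1), ∃ v ∈ RMbase r' m', w = odot c v}
  termination_by r μ => μ

/-- Monomial evaluation `mon_{S₁ ∪ ⋯ ∪ S_μ}` on the block-structured space;
a subset `S ⊆ Fin (μ·m')` is identified with a subset of `Fin μ × Fin m'`,
the first coordinate being the block index. -/
def monP {m' μ : ℕ} (S : Finset (Fin μ × Fin m')) : Vsp m' μ :=
  fun x => ∏ p ∈ S, x p.1 p.2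

-- ===== auxiliary development =====

lemma monA_indep (α : Type*) [Fintype α] [DecidableEq α] :
    LinearIndependent (ZMod 2)
      (fun S : Finset α => (fun x => ∏ i ∈ S, x i : (α → ZMod 2) → ZMod 2)) := by
  rw [Fintype.linearIndependent_iff]
  intro g hg S
  induction S using Finset.strongInduction with
  | _ S IH =>
    have h := congrFun hg (fun i => if i ∈ S then 1 else 0)
    simp only [Finset.sum_apply, Pi.smul_apply, smul_eq_mul, Pi.zero_apply] at h
    have key : ∀ T : Finset α, (∏ i ∈ T, (if i ∈ S then (1:ZMod 2) else 0))
        = if T ⊆ S then 1 else 0 := by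
      intro T
      by_cases hTS : T ⊆ S
      · rw [if_pos hTS, Finset.prod_eq_one]
        intro i hi; rw [if_pos (hTS hi)]
      · rw [if_neg hTS]
        obtain ⟨i, hiT, hiS⟩ := Finset.not_subset.1 hTS
        exact Finset.prod_eq_zero hiT (if_neg hiS)
    simp only [key, mul_ite, mul_one, mul_zero] at h
    rw [Finset.sum_ite, Finset.sum_const_zero, add_zero] at h
    have hfil : Finset.univ.filter (fun T : Finset α => T ⊆ S) = S.powerset := by
      ext T; simp
    rw [hfil, Finset.sum_eq_single_of_mem S (Finset.mem_powerset_self S)] at h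
    · exact h
    · intro T hT hTne
      exact IH T (Finset.ssubset_iff_subset_ne.2 ⟨Finset.mem_powerset.1 hT, hTne⟩)

lemma monP_indep (m m' : ℕ) :
    LinearIndependent (ZMod 2) (fun S : Finset (Fin m × Fin m') => monP (m' := m') S) := by
  have li := monA_indep (Fin m × Fin m')
  have hsurj : Function.Surjective
      (fun (x : Fin m → Fin m' → ZMod 2) (p : Fin m × Fin m') => x p.1 p.2) := by
    intro y; exact ⟨fun i j => y (i, j), rfl⟩
  have hinj := LinearMap.funLeft_injective_of_surjective (ZMod 2) (ZMod 2) _ hsurj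
  have := li.map' (LinearMap.funLeft (ZMod 2) (ZMod 2)
      (fun (x : Fin m → Fin m' → ZMod 2) (p : Fin m × Fin m') => x p.1 p.2))
      (LinearMap.ker_eq_bot.2 hinj)
  exact this

-- bilinear version of odot
def odotL (m' μ : ℕ) : Vsp m' μ →ₗ[ZMod 2]
    ((Fin m' → ZMod 2) → ZMod 2) →ₗ[ZMod 2] Vsp m' (μ + 1) :=
  LinearMap.mk₂ (ZMod 2) odot
    (fun c c' v => by funext x; simp [odot, add_mul])
    (fun a c v => by funext x; simp [odot]; ring)
    (fun c v v' => by funext x; simp [odot, mul_add])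
    (fun a c v => by funext x; simp [odot]; ring)

def liftS {m' μ : ℕ} (S : Finset (Fin μ × Fin m')) : Finset (Fin (μ+1) × Fin m') :=
  S.image (fun p => (p.1.castSucc, p.2))

def embT {m' : ℕ} (μ : ℕ) (T : Finset (Fin m')) : Finset (Fin (μ+1) × Fin m') :=
  T.image (fun j => (Fin.last μ, j))

lemma liftS_inj {m' μ : ℕ} : Function.Injective
    (fun p : Fin μ × Fin m' => ((p.1.castSucc : Fin (μ+1)), p.2)) := by
  intro p q h
  simp only [Prod.mk.injEq, Fin.castSucc_inj] at h
  exact Prod.ext h.1 h.2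

lemma odot_monP {m' μ : ℕ} (S : Finset (Fin μ × Fin m')) (T : Finset (Fin m')) :
    odot (monP S) (fun x => ∏ j ∈ T, x j) = monP (liftS S ∪ embT μ T) := by
  funext x
  have hdisj : Disjoint (liftS S) (embT μ T) := by
    rw [Finset.disjoint_left]
    rintro p hp hq
    simp only [liftS, Finset.mem_image] at hp
    simp only [embT, Finset.mem_image] at hq
    obtain ⟨a, _, rfl⟩ := hp
    obtain ⟨b, _, hb⟩ := hq
    have : a.1.castSucc = Fin.last μ := congrArg Prod.fst hb.symm
    exact absurd this (Fin.castSucc_lt_last a.1).ne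
  rw [monP, Finset.prod_union hdisj]
  simp only [odot, monP, liftS, embT]
  rw [Finset.prod_image (fun a _ b _ h => liftS_inj h),
    Finset.prod_image (by intro a _ b _ h; exact congrArg Prod.snd h)]

def part0 {m' μ : ℕ} (S : Finset (Fin (μ+1) × Fin m')) : Finset (Fin μ × Fin m') :=
  Finset.univ.filter (fun q => ((q.1.castSucc : Fin (μ+1)), q.2) ∈ S)

def partT {m' μ : ℕ} (S : Finset (Fin (μ+1) × Fin m')) : Finset (Fin m') :=
  Finset.univ.filter (fun j => ((Fin.last μ : Fin (μ+1)), j) ∈ S)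

lemma decomp {m' μ : ℕ} (S : Finset (Fin (μ+1) × Fin m')) :
    liftS (part0 S) ∪ embT μ (partT S) = S := by
  ext p
  simp only [Finset.mem_union, liftS, embT, part0, partT, Finset.mem_image,
    Finset.mem_filter, Finset.mem_univ, true_and]
  constructor
  · rintro (⟨q, hq, rfl⟩ | ⟨j, hj, rfl⟩) <;> assumption
  · intro hp
    rcases Fin.eq_castSucc_or_eq_last p.1 with ⟨q, hq⟩ | hlast
    · exact Or.inl ⟨(q, p.2), by rw [← hq]; exact hp, by rw [← hq]⟩
    · exact Or.inr ⟨p.2, by rw [← hlast]; exact hp, by rw [← hlast]⟩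

lemma embT_inj {m' μ : ℕ} : Function.Injective
    (fun j : Fin m' => ((Fin.last μ : Fin (μ+1)), j)) := by
  intro a b h; exact congrArg Prod.snd h

lemma filter_liftS_union {m' μ : ℕ} (S : Finset (Fin μ × Fin m')) (T : Finset (Fin m'))
    (i : Fin (μ+1)) :
    ((liftS S ∪ embT μ T).filter (fun p => p.1 = i)).card
      = if h : i = Fin.last μ then T.card
        else (S.filter (fun p => p.1 = i.castPred h)).card := by
  rw [Finset.filter_union]
  by_cases h : i = Fin.last μ
  · subst h
    rw [dif_pos rfl]
    have h1 : (liftS S).filter (fun p => p.1 = Fin.last μ) = ∅ := by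
      rw [Finset.filter_eq_empty_iff]
      rintro p hp
      simp only [liftS, Finset.mem_image] at hp
      obtain ⟨q, _, rfl⟩ := hp
      exact (Fin.castSucc_lt_last q.1).ne
    have h2 : (embT μ T).filter (fun p => p.1 = Fin.last μ) = embT μ T := by
      rw [Finset.filter_eq_self]
      rintro p hp
      simp only [embT, Finset.mem_image] at hp
      obtain ⟨j, _, rfl⟩ := hp
      rfl
    rw [h1, h2, Finset.empty_union, embT, Finset.card_image_of_injective _ embT_inj]
  · rw [dif_neg h]
    have h1 : (embT μ T).filter (fun p => p.1 = i) = ∅ := by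
      rw [Finset.filter_eq_empty_iff]
      rintro p hp
      simp only [embT, Finset.mem_image] at hp
      obtain ⟨j, _, rfl⟩ := hp
      exact fun hh => h hh.symm
    have h2 : (liftS S).filter (fun p => p.1 = i)
        = liftS (S.filter (fun p => p.1 = i.castPred h)) := by
      ext p
      simp only [liftS, Finset.mem_filter, Finset.mem_image]
      constructor
      · rintro ⟨⟨q, hq, rfl⟩, hfst⟩
        exact ⟨q, ⟨hq, by simp only [← hfst]; simp⟩, rfl⟩
      · rintro ⟨q, ⟨hq, hq2⟩, rfl⟩
        exact ⟨⟨q, hq, rfl⟩, by simp [hq2]⟩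
    rw [h1, h2, Finset.union_empty, liftS, Finset.card_image_of_injective _ liftS_inj]

lemma image_fst_liftS_union {m' μ : ℕ} (S : Finset (Fin μ × Fin m')) (T : Finset (Fin m')) :
    ((liftS S ∪ embT μ T).image Prod.fst).card
      ≤ (S.image Prod.fst).card + (if T = ∅ then 0 else 1) := by
  rw [Finset.image_union]
  refine le_trans (Finset.card_union_le _ _) (Nat.add_le_add ?_ ?_)
  · have : (liftS S).image Prod.fst = (S.image Prod.fst).image Fin.castSucc := by
      simp only [liftS, Finset.image_image]; rfl
    rw [this, Finset.card_image_of_injective _ (Fin.castSucc_injective μ)]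
  · by_cases hT : T = ∅
    · simp [hT, embT]
    · rw [if_neg hT]
      refine le_trans (Finset.card_le_card ?_) (Finset.card_singleton (Fin.last μ)).le
      intro i hi
      simp only [embT, Finset.image_image, Finset.mem_image] at hi
      obtain ⟨j, _, rfl⟩ := hi
      simp

lemma filter_part0_eq {m' μ : ℕ} (S : Finset (Fin (μ+1) × Fin m')) (q : Fin μ) :
    ((part0 S).filter (fun p => p.1 = q)).card
      = (S.filter (fun p => p.1 = q.castSucc)).card := by
  have h : liftS ((part0 S).filter (fun p => p.1 = q))
      = S.filter (fun p => p.1 = q.castSucc) := by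
    ext p
    simp only [liftS, part0, Finset.mem_image, Finset.mem_filter, Finset.mem_univ, true_and]
    constructor
    · rintro ⟨a, ⟨ha, rfl⟩, rfl⟩
      exact ⟨ha, rfl⟩
    · rintro ⟨hp, hfst⟩
      exact ⟨(q, p.2), ⟨by rw [← hfst, Prod.mk.eta]; exact hp, rfl⟩,
        by rw [← hfst, Prod.mk.eta]⟩
  rw [← h, liftS, Finset.card_image_of_injective _ liftS_inj]

lemma card_partT {m' μ : ℕ} (S : Finset (Fin (μ+1) × Fin m')) :
    (partT S).card = (S.filter (fun p => p.1 = Fin.last μ)).card := by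
  have h : embT μ (partT S) = S.filter (fun p => p.1 = Fin.last μ) := by
    ext p
    simp only [embT, partT, Finset.mem_image, Finset.mem_filter, Finset.mem_univ, true_and]
    constructor
    · rintro ⟨j, hj, rfl⟩; exact ⟨hj, rfl⟩
    · rintro ⟨hp, hfst⟩
      exact ⟨p.2, by rw [← hfst, Prod.mk.eta]; exact hp, by rw [← hfst, Prod.mk.eta]⟩
  rw [← h, embT, Finset.card_image_of_injective _ embT_inj]

lemma image_fst_part0_le {m' μ : ℕ} (S : Finset (Fin (μ+1) × Fin m')) :
    ((part0 S).image Prod.fst).card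
      + (if partT S = ∅ then 0 else 1) ≤ (S.image Prod.fst).card := by
  set A := ((part0 S).image Prod.fst).image Fin.castSucc with hA
  have hAcard : A.card = ((part0 S).image Prod.fst).card :=
    Finset.card_image_of_injective _ (Fin.castSucc_injective μ)
  have hAsub : A ⊆ S.image Prod.fst := by
    intro i hi
    simp only [hA, part0, Finset.mem_image, Finset.mem_filter, Finset.mem_univ, true_and] at hi
    obtain ⟨q, ⟨p, hp, rfl⟩, rfl⟩ := hi
    exact Finset.mem_image.2 ⟨(p.1.castSucc, p.2), hp, rfl⟩
  by_cases hT : partT S = ∅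
  · rw [if_pos hT, Nat.add_zero, ← hAcard]
    exact Finset.card_le_card hAsub
  · rw [if_neg hT]
    obtain ⟨j, hj⟩ := Finset.nonempty_iff_ne_empty.2 hT
    simp only [partT, Finset.mem_filter, Finset.mem_univ, true_and] at hj
    have hlast : Fin.last μ ∈ S.image Prod.fst := Finset.mem_image.2 ⟨_, hj, rfl⟩
    have hlastA : Fin.last μ ∉ A := by
      intro hmem
      simp only [hA, Finset.mem_image] at hmem
      obtain ⟨q, _, hq⟩ := hmem
      exact (Fin.castSucc_lt_last q).ne hq
    have hsub : insert (Fin.last μ) A ⊆ S.image Prod.fst := by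
      intro i hi
      rcases Finset.mem_insert.1 hi with rfl | hi
      · exact hlast
      · exact hAsub hi
    calc ((part0 S).image Prod.fst).card + 1 = (insert (Fin.last μ) A).card := by
          rw [Finset.card_insert_of_notMem hlastA, hAcard]
      _ ≤ _ := Finset.card_le_card hsub

def famset (m' r' r μ : ℕ) : Set (Vsp m' μ) :=
  {c | ∃ S : Finset (Fin μ × Fin m'),
    (∀ i, (S.filter fun p => p.1 = i).card ≤ r') ∧ (S.image Prod.fst).card ≤ r ∧ c = monP S}

def RMset (r' m' : ℕ) : Set ((Fin m' → ZMod 2) → ZMod 2) :=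
  {c | ∃ S : Finset (Fin m'), S.card ≤ r' ∧ c = fun x => ∏ i ∈ S, x i}

lemma RMbase_eq_span (r' m' : ℕ) :
    RMbase r' m' = Submodule.span (ZMod 2) (RMset r' m') := rfl

lemma prod_empty_one (m' : ℕ) :
    (fun x : Fin m' → ZMod 2 => ∏ j ∈ (∅ : Finset (Fin m')), x j) = (fun _ => 1) := by
  funext x; simp

lemma monP_union_mem {m' r' r μ : ℕ} (S : Finset (Fin μ × Fin m')) (T : Finset (Fin m'))
    (hfil : ∀ i, (S.filter fun p => p.1 = i).card ≤ r') (hT : T.card ≤ r')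
    (himg : (S.image Prod.fst).card + (if T = ∅ then 0 else 1) ≤ r) :
    monP (liftS S ∪ embT μ T) ∈ famset m' r' r (μ+1) := by
  refine ⟨liftS S ∪ embT μ T, fun i => ?_, le_trans (image_fst_liftS_union S T) himg, rfl⟩
  rw [filter_liftS_union]
  split
  · exact hT
  · exact hfil _

lemma span_famset_eq (m' r' : ℕ) :
    ∀ m, 1 ≤ m → ∀ r, r ≤ m →
    Submodule.span (ZMod 2) (famset m' r' r m) = Dcode r' m' r m := by
  intro m
  induction m with
  | zero => intro h; exact absurd h (by omega)
  | succ μ IH =>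
    intro _ r hr
    rcases Nat.eq_zero_or_pos r with rfl | hrpos
    · -- r = 0
      have hset : famset m' r' 0 (μ+1) = {c : Vsp m' (μ+1) | c = fun _ => 1} := by
        ext c
        constructor
        · rintro ⟨S, _, himg, rfl⟩
          have hS : S = ∅ := by
            have := Finset.card_eq_zero.1 (Nat.le_zero.1 himg)
            exact Finset.image_eq_empty.1 this
          subst hS
          show monP ∅ = _
          funext x; simp [monP]
        · rintro rfl
          exact ⟨∅, by simp, by simp, by funext x; simp [monP]⟩
      rw [hset, Dcode]
    · obtain ⟨r0, rfl⟩ : ∃ r0, r = r0 + 1 := ⟨r - 1, by omega⟩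
      rcases Nat.eq_zero_or_pos μ with rfl | hμpos
      · -- m = 1, r = 1
        have hr0 : r0 = 0 := by omega
        subst hr0
        have hone : ∀ a b : Fin (0+1), a = b := fun a b => Fin.ext (by omega)
        rw [Dcode]
        congr 1
        ext c
        constructor
        · rintro ⟨S, hfil, _, rfl⟩
          refine ⟨S.image Prod.snd, ?_, ?_⟩
          · calc (S.image Prod.snd).card ≤ S.card := Finset.card_image_le
              _ = (S.filter (fun p => p.1 = (0 : Fin 1))).card := by
                  rw [Finset.filter_eq_self.2 (fun p _ => hone _ _)]
              _ ≤ r' := hfil 0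
          · funext x
            rw [monP, Finset.prod_image]
            · exact Finset.prod_congr rfl (fun p _ => by
                congr 1; exact hone _ _)
            · intro a ha b hb h
              exact Prod.ext (hone _ _) h
        · rintro ⟨T, hT, rfl⟩
          refine ⟨T.image (fun j => ((0 : Fin 1), j)), fun i => ?_, ?_, ?_⟩
          · calc ((T.image (fun j => ((0 : Fin 1), j))).filter (fun p => p.1 = i)).card
                ≤ (T.image (fun j => ((0 : Fin 1), j))).card := Finset.card_filter_le _ _
              _ = T.card := Finset.card_image_of_injective _
                  (fun a b h => congrArg Prod.snd h)
              _ ≤ r' := hT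
          · calc ((T.image (fun j => ((0 : Fin 1), j))).image Prod.fst).card
                ≤ Fintype.card (Fin 1) := Finset.card_le_univ _
              _ = 1 := by simp
          · funext x
            rw [monP, Finset.prod_image (fun a _ b _ h => congrArg Prod.snd h)]
      · obtain ⟨ν, rfl⟩ : ∃ ν, μ = ν + 1 := ⟨μ - 1, by omega⟩
        have IH' := IH (by omega)
        have hfam_le : ∀ rr, rr ≤ ν + 1 → ∀ (S : Finset (Fin (ν+2) × Fin m')),
            (∀ i, (S.filter fun p => p.1 = i).card ≤ r') →
            ((part0 S).image Prod.fst).card + (if partT S = ∅ then 0 else 1) ≤ rr + 1 →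
            ((part0 S).image Prod.fst).card ≤ rr + 1 ∧
            (∀ q, ((part0 S).filter fun p => p.1 = q).card ≤ r') ∧
            (partT S).card ≤ r' := by
          intro rr _ S hfil himg
          refine ⟨by split at himg <;> omega, fun q => ?_, ?_⟩
          · rw [filter_part0_eq]; exact hfil _
          · rw [card_partT]; exact hfil _
        by_cases hlt : r0 + 1 < ν + 2
        · rw [Dcode, if_pos hlt]
          apply le_antisymm
          · rw [Submodule.span_le]
            rintro c ⟨S, hfil, himg, rfl⟩
            have hdec : monP S = odot (monP (part0 S))
                (fun x => ∏ j ∈ partT S, x j) := by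
              rw [odot_monP, decomp]
            have hfil0 : ∀ q, ((part0 S).filter fun p => p.1 = q).card ≤ r' :=
              fun q => by rw [filter_part0_eq]; exact hfil _
            have hTcard : (partT S).card ≤ r' := by rw [card_partT]; exact hfil _
            have hkey := image_fst_part0_le S
            by_cases hT : partT S = ∅
            · apply Submodule.subset_span
              left
              refine ⟨monP (part0 S), ?_, ?_⟩
              · rw [← IH' (r0+1) (by omega)]
                refine Submodule.subset_span ⟨part0 S, hfil0, ?_, rfl⟩
                rw [if_pos hT] at hkey
                omega
              · rw [hdec, hT, prod_empty_one]
            · apply Submodule.subset_span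
              right
              refine ⟨monP (part0 S), ?_, (fun x => ∏ j ∈ partT S, x j), ?_, hdec⟩
              · rw [← IH' r0 (by omega)]
                refine Submodule.subset_span ⟨part0 S, hfil0, ?_, rfl⟩
                rw [if_neg hT] at hkey
                omega
              · exact Submodule.subset_span ⟨partT S, hTcard, rfl⟩
          · rw [Submodule.span_le]
            rintro w (⟨c, hc, rfl⟩ | ⟨c, hc, v, hv, rfl⟩)
            · rw [← IH' (r0+1) (by omega)] at hc
              have hmap : Submodule.map ((odotL m' (ν+1)).flip (fun _ => 1))
                  (Submodule.span (ZMod 2) (famset m' r' (r0+1) (ν+1)))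
                  ≤ Submodule.span (ZMod 2) (famset m' r' (r0+1) (ν+2)) := by
                rw [Submodule.map_span, Submodule.span_le]
                rintro w ⟨a, ⟨S₀, h1, h2, rfl⟩, rfl⟩
                apply Submodule.subset_span
                show odot (monP S₀) (fun _ => 1) ∈ _
                rw [← prod_empty_one m', odot_monP]
                exact monP_union_mem S₀ ∅ h1 (by simp) (by simp; omega)
              exact hmap (Submodule.mem_map_of_mem hc)
            · rw [← IH' r0 (by omega)] at hc
              rw [RMbase_eq_span] at hv
              have hmap : Submodule.map₂ (odotL m' (ν+1))
                  (Submodule.span (ZMod 2) (famset m' r' r0 (ν+1)))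
                  (Submodule.span (ZMod 2) (RMset r' m'))
                  ≤ Submodule.span (ZMod 2) (famset m' r' (r0+1) (ν+2)) := by
                rw [Submodule.map₂_span_span, Submodule.span_le]
                rintro w ⟨a, ⟨S₀, h1, h2, rfl⟩, b, ⟨T, hT, rfl⟩, rfl⟩
                apply Submodule.subset_span
                show odot (monP S₀) (fun x => ∏ j ∈ T, x j) ∈ _
                rw [odot_monP]
                refine monP_union_mem S₀ T h1 hT ?_
                split <;> omega
              exact hmap (Submodule.apply_mem_map₂ _ hc hv)
        · -- r0 + 1 = ν + 2
          have hr0 : r0 = ν + 1 := by omega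
          subst hr0
          rw [Dcode, if_neg hlt]
          apply le_antisymm
          · rw [Submodule.span_le]
            rintro c ⟨S, hfil, _, rfl⟩
            have hdec : monP S = odot (monP (part0 S))
                (fun x => ∏ j ∈ partT S, x j) := by
              rw [odot_monP, decomp]
            have hfil0 : ∀ q, ((part0 S).filter fun p => p.1 = q).card ≤ r' :=
              fun q => by rw [filter_part0_eq]; exact hfil _
            have hTcard : (partT S).card ≤ r' := by rw [card_partT]; exact hfil _
            apply Submodule.subset_span
            refine ⟨monP (part0 S), ?_, (fun x => ∏ j ∈ partT S, x j), ?_, hdec⟩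
            · rw [← IH' (ν+1) le_rfl]
              refine Submodule.subset_span ⟨part0 S, hfil0, ?_, rfl⟩
              calc ((part0 S).image Prod.fst).card
                  ≤ Fintype.card (Fin (ν+1)) := Finset.card_le_univ _
                _ = ν + 1 := by simp
            · exact Submodule.subset_span ⟨partT S, hTcard, rfl⟩
          · rw [Submodule.span_le]
            rintro w ⟨c, hc, v, hv, rfl⟩
            rw [← IH' (ν+1) le_rfl] at hc
            rw [RMbase_eq_span] at hv
            have hmap : Submodule.map₂ (odotL m' (ν+1))
                (Submodule.span (ZMod 2) (famset m' r' (ν+1) (ν+1)))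
                (Submodule.span (ZMod 2) (RMset r' m'))
                ≤ Submodule.span (ZMod 2) (famset m' r' (ν+2) (ν+2)) := by
              rw [Submodule.map₂_span_span, Submodule.span_le]
              rintro w ⟨a, ⟨S₀, h1, h2, rfl⟩, b, ⟨T, hT, rfl⟩, rfl⟩
              apply Submodule.subset_span
              show odot (monP S₀) (fun x => ∏ j ∈ T, x j) ∈ _
              rw [odot_monP]
              refine monP_union_mem S₀ T h1 hT ?_
              split <;> omega
            exact hmap (Submodule.apply_mem_map₂ _ hc hv)

/-- for `0 ≤ r ≤ m`, the monomials `mon_{S₁ ∪ ⋯ ∪ S_m}` with `Sᵢ ⊆ Bᵢ`,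
`|Sᵢ| ≤ r'`, and at most `r` of the `Sᵢ` nonempty, form a basis (linearly independent
spanning family) of `D(r,m)` with base code `RM(r',m')`. -/
theorem stmt_1 (m m' r' : ℕ) (hm : 1 ≤ m) (hm' : 1 ≤ m') (hr'1 : 1 ≤ r') (hr'2 : r' ≤ m')
    (r : ℕ) (hr : r ≤ m) :
    LinearIndependent (ZMod 2)
      (fun S : {S : Finset (Fin m × Fin m') //
          (∀ i : Fin m, (S.filter fun p => p.1 = i).card ≤ r') ∧
          (S.image Prod.fst).card ≤ r} => monP S.val) ∧
    Submodule.span (ZMod 2)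
      (Set.range (fun S : {S : Finset (Fin m × Fin m') //
          (∀ i : Fin m, (S.filter fun p => p.1 = i).card ≤ r') ∧
          (S.image Prod.fst).card ≤ r} => monP S.val)) = Dcode r' m' r m := by
  constructor
  · exact (monP_indep m m').comp Subtype.val Subtype.val_injective
  · have hrange : Set.range (fun S : {S : Finset (Fin m × Fin m') //
          (∀ i : Fin m, (S.filter fun p => p.1 = i).card ≤ r') ∧
          (S.image Prod.fst).card ≤ r} => monP S.val) = famset m' r' r m := by
      ext c
      constructor
      · rintro ⟨⟨S, h1, h2⟩, rfl⟩; exact ⟨S, h1, h2, rfl⟩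
      · rintro ⟨S, h1, h2, rfl⟩; exact ⟨⟨S, h1, h2⟩, rfl⟩
    rw [hrange]
    exact span_famset_eq m' r' m hm r hr
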